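/- If a graph H (with both directed and undirected edges) is obtained from a graph K by converting every arrow that lies on some semi-directed cycle of K into a line, then H contains no semi-directed cycle all of whose arrows already occurred as arrows in K that did not lie on any semi-directed cycle of K. Consequently, H is a chain graph (contains no semi-directed cycle). -/
import Mathlib


/-- A mixed graph: directed edges (arrows) and undirected edges (lines),
no loops, at most one edge between any two vertices. -/
structure MixedGraph (V : Type) where
  arrow : V → V → Prop
  line : V → V → Prop
  line_symm : ∀ a b, line a b → line b a
  arrow_irrefl : ∀ a, ¬ arrow a a
  line_irrefl : ∀ a, ¬ line a a
  not_arrow_line : ∀ a b, arrow a b → ¬ line a b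
  not_arrow_arrow : ∀ a b, arrow a b → ¬ arrow b a

namespace MixedGraph

variable {V : Type}

/-- `a` and `b` are adjacent (joined by some edge). -/
def adj (G : MixedGraph V) (a b : V) : Prop := G.arrow a b ∨ G.arrow b a ∨ G.line a b

/-- A step of a semi-directed path: a forward arrow or a line. -/
def step (G : MixedGraph V) (a b : V) : Prop := G.arrow a b ∨ G.line a b

/-- A semi-directed cycle of length `k ≥ 3`: `v 0, …, v k` with `v k = v 0`,
each step an arrow or a line, at least one arrow, vertices distinct. -/
def IsSemiDirectedCycle (G : MixedGraph V) (k : ℕ) (v : ℕ → V) : Prop :=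
  3 ≤ k ∧ v k = v 0 ∧ (∀ i, i < k → G.step (v i) (v (i + 1))) ∧
    (∃ i, i < k ∧ G.arrow (v i) (v (i + 1))) ∧
    (∀ i j, i < j → j < k → v i ≠ v j)

/-- A chain graph is a mixed graph with no semi-directed cycle. -/
def IsChainGraph (G : MixedGraph V) : Prop := ∀ k v, ¬ G.IsSemiDirectedCycle k v

/-- A triplex `({a,c}, b)`: `a, c` nonadjacent and the induced subgraph on `{a,b,c}`
is `a→b←c`, `a→b−c`, or `a−b←c`. -/
def triplex (G : MixedGraph V) (a b c : V) : Prop :=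
  a ≠ c ∧ ¬ G.adj a c ∧
    ((G.arrow a b ∧ G.arrow c b) ∨ (G.arrow a b ∧ G.line b c) ∨ (G.line a b ∧ G.arrow c b))

def sameSkeleton (G H : MixedGraph V) : Prop := ∀ a b, G.adj a b ↔ H.adj a b

def sameTriplexes (G H : MixedGraph V) : Prop := ∀ a b c, G.triplex a b c ↔ H.triplex a b c

end MixedGraph

/-- The arrow `a→b` of `K` lies on some semi-directed cycle of `K`. -/
def MixedGraph.arrowOnCycle {V : Type} (K : MixedGraph V) (a b : V) : Prop :=
  ∃ k v, K.IsSemiDirectedCycle k v ∧ ∃ i, i < k ∧ v i = a ∧ v (i + 1) = b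

namespace MGAux
variable {V : Type}

def IsWalk (K : MixedGraph V) (n : ℕ) (w : ℕ → V) : Prop :=
  ∀ i, i < n → K.step (w i) (w (i+1))

lemma walk_comp {K : MixedGraph V} {n m : ℕ} {w u : ℕ → V}
    (hw : IsWalk K n w) (hu : IsWalk K m u) (h : w n = u 0) :
    ∃ z, IsWalk K (n+m) z ∧ z 0 = w 0 ∧ z (n+m) = u m := by
  refine ⟨fun i => if i ≤ n then w i else u (i - n), ?_, by simp, ?_⟩
  · intro i hi
    by_cases h1 : i + 1 ≤ n
    · simp only [if_pos (show i ≤ n by omega), if_pos h1]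
      exact hw i (by omega)
    · by_cases h2 : i ≤ n
      · have hin : i = n := by omega
        subst hin
        simp only [if_pos h2, if_neg h1, h]
        have : i + 1 - i = 1 := by omega
        rw [this]
        exact hu 0 (by omega)
      · simp only [if_neg h2, if_neg (show ¬ i + 1 ≤ n by omega)]
        have : i + 1 - n = (i - n) + 1 := by omega
        rw [this]
        exact hu (i - n) (by omega)
  · by_cases hm : m = 0
    · subst hm; simp [h]
    · simp only [if_neg (show ¬ n + m ≤ n by omega)]
      congr 1
      omega

lemma walk_nodup {K : MixedGraph V} :
    ∀ n (w : ℕ → V), IsWalk K n w →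
      ∃ m u, m ≤ n ∧ IsWalk K m u ∧ u 0 = w 0 ∧ u m = w n ∧
        ∀ i j, i < j → j ≤ m → u i ≠ u j := by
  intro n
  induction n using Nat.strong_induction_on with
  | _ n ih =>
    intro w hw
    by_cases hdup : ∃ i j, i < j ∧ j ≤ n ∧ w i = w j
    · obtain ⟨i, j, hij, hjn, heq⟩ := hdup
      set n' := n - (j - i) with hn'
      have hn'lt : n' < n := by omega
      set u : ℕ → V := fun t => if t ≤ i then w t else w (t + (j - i)) with hu
      have hwalk : IsWalk K n' u := by
        intro t ht
        by_cases h1 : t + 1 ≤ i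
        · simp only [hu, if_pos (show t ≤ i by omega), if_pos h1]
          exact hw t (by omega)
        · by_cases h2 : t ≤ i
          · have hti : t = i := by omega
            subst hti
            simp only [hu, if_pos h2, if_neg h1, heq]
            have : t + 1 + (j - t) = j + 1 := by omega
            rw [this]
            exact hw j (by omega)
          · simp only [hu, if_neg h2, if_neg (show ¬ t + 1 ≤ i by omega)]
            have : t + 1 + (j - i) = (t + (j - i)) + 1 := by omega
            rw [this]
            exact hw (t + (j - i)) (by omega)
      obtain ⟨m, z, hm, hz, hz0, hzm, hnd⟩ := ih n' hn'lt u hwalk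
      refine ⟨m, z, le_trans hm (le_of_lt hn'lt), hz, ?_, ?_, hnd⟩
      · rw [hz0]; simp [hu]
      · rw [hzm]
        by_cases h3 : n' ≤ i
        · have h4 : n' = i := by omega
          simp only [hu, if_pos h3, h4, heq]
          rw [if_pos (le_refl i)]
          have h5 : j = n := by omega
          rw [h5]
        · simp only [hu, if_neg h3]
          have h5 : n' + (j - i) = n := by omega
          rw [h5]
    · push_neg at hdup
      exact ⟨n, w, le_refl _, hw, rfl, rfl, fun i j h1 h2 => hdup i j h1 h2⟩

/-- If `K.arrow a b` and there is a K-walk from `b` to `a`, then `a→b` is on a cycle. -/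
lemma arrow_on_cycle_of_walk {K : MixedGraph V} {a b : V} {n : ℕ} {w : ℕ → V}
    (hab : K.arrow a b) (hw : IsWalk K n w) (h0 : w 0 = b) (hn : w n = a) :
    K.arrowOnCycle a b := by
  obtain ⟨m, u, hmn, hu, hu0, hum, hnd⟩ := walk_nodup n w hw
  rw [h0] at hu0
  rw [hn] at hum
  have hab' : a ≠ b := by rintro rfl; exact K.arrow_irrefl a hab
  have hm1 : 1 ≤ m := by
    by_contra h
    have : m = 0 := by omega
    subst this
    rw [hu0] at hum; exact hab' hum.symm
  have hm2 : 2 ≤ m := by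
    by_contra h
    have : m = 1 := by omega
    subst this
    have := hu 0 (by omega)
    rw [hu0, hum] at this
    rcases this with h | h
    · exact K.not_arrow_arrow a b hab h
    · exact K.not_arrow_line a b hab (K.line_symm b a h)
  -- cycle: c 0 = a, c t = u (t-1) for t ≥ 1, length m+1
  set c : ℕ → V := fun t => if t = 0 then a else u (t - 1) with hc
  refine ⟨m + 1, c, ⟨by omega, ?_, ?_, ⟨0, by omega, ?_⟩, ?_⟩, 0, by omega, by simp [hc], ?_⟩
  · simp only [hc, if_neg (show ¬ m + 1 = 0 by omega), if_pos rfl]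
    simpa using hum
  · intro i hi
    by_cases h0' : i = 0
    · subst h0'
      simp only [hc, if_pos rfl, if_neg (show ¬ (1:ℕ) = 0 by omega)]
      rw [show (1:ℕ) - 1 = 0 from rfl, hu0]
      exact Or.inl hab
    · simp only [hc, if_neg h0', if_neg (show ¬ i + 1 = 0 by omega)]
      have : i + 1 - 1 = (i - 1) + 1 := by omega
      rw [this]
      exact hu (i - 1) (by omega)
  · show K.arrow (c 0) (c (0+1))
    have e0 : c 0 = a := by simp [hc]
    have e1 : c (0+1) = b := by simp [hc, hu0]
    rw [e0, e1]; exact hab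
  · intro i j hij hjk
    by_cases h0' : i = 0
    · subst h0'
      simp only [hc, if_pos rfl, if_neg (show ¬ j = 0 by omega)]
      intro hcon
      exact hnd (j-1) m (by omega) (le_refl m) (by rw [← hcon, hum])
    · simp only [hc, if_neg h0', if_neg (show ¬ j = 0 by omega)]
      exact hnd (i-1) (j-1) (by omega) (by omega)
  · simp [hc, hu0]

end MGAux

namespace MGAux
variable {V : Type}

lemma cyc_step {K : MixedGraph V} {m : ℕ} {c : ℕ → V} (hm : 0 < m)
    (hcm : c m = c 0) (hstep : ∀ i, i < m → K.step (c i) (c (i+1))) :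
    ∀ q, q < m → K.step (c q) (c ((q+1) % m)) := by
  intro q hq
  by_cases h : q + 1 = m
  · rw [h, Nat.mod_self, ← hcm, ← h]
    exact hstep q hq
  · rw [Nat.mod_eq_of_lt (by omega)]
    exact hstep q hq

lemma walk_of_onCycle {K : MixedGraph V} {x y : V}
    (h : K.arrowOnCycle y x) :
    ∃ n w, IsWalk K n w ∧ w 0 = x ∧ w n = y := by
  obtain ⟨m, c, ⟨hm3, hcm, hstep, _, _⟩, p, hp, hcp, hcp1⟩ := h
  refine ⟨m - 1, fun j => c ((p + 1 + j) % m), ?_, ?_, ?_⟩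
  · intro j hj
    show K.step (c ((p + 1 + j) % m)) (c ((p + 1 + (j + 1)) % m))
    have hq : (p + 1 + j) % m < m := Nat.mod_lt _ (by omega)
    have e : (p + 1 + (j + 1)) % m = ((p + 1 + j) % m + 1) % m := by
      rw [Nat.mod_add_mod]
      exact congrArg (· % m) (by omega)
    rw [e]
    exact cyc_step (by omega) hcm hstep _ hq
  · show c ((p + 1 + 0) % m) = x
    rw [Nat.add_zero]
    by_cases h : p + 1 = m
    · rw [h, Nat.mod_self, ← hcm, ← h]
      exact hcp1
    · rw [Nat.mod_eq_of_lt (by omega)]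
      exact hcp1
  · show c ((p + 1 + (m - 1)) % m) = y
    have e : (p + 1 + (m - 1)) % m = p := by
      rw [show p + 1 + (m - 1) = p + m by omega, Nat.add_mod_right, Nat.mod_eq_of_lt hp]
    rw [e]
    exact hcp

lemma exists_walk_of {K : MixedGraph V} {x y : V}
    (h : K.step x y ∨ K.arrowOnCycle y x) :
    ∃ n w, IsWalk K n w ∧ w 0 = x ∧ w n = y := by
  rcases h with h | h
  · refine ⟨1, fun j => if j = 0 then x else y, ?_, by simp, by simp⟩
    intro i hi
    have : i = 0 := by omega
    subst this
    simpa using h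
  · exact walk_of_onCycle h

end MGAux


open MGAux in
/-- If `H = K°` is obtained from `K` by converting every arrow lying on a semi-directed
cycle of `K` into a line, then `H` has no semi-directed cycle all of whose arrows were
arrows of `K` lying on no semi-directed cycle of `K`; consequently `H` is a chain graph. -/
theorem stmt0 {V : Type} (K H : MixedGraph V)
    (hA : ∀ a b, H.arrow a b ↔ K.arrow a b ∧ ¬ K.arrowOnCycle a b)
    (hL : ∀ a b, H.line a b ↔
      K.line a b ∨ (K.arrow a b ∧ K.arrowOnCycle a b) ∨ (K.arrow b a ∧ K.arrowOnCycle b a)) :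
    (∀ k v, ¬ (H.IsSemiDirectedCycle k v ∧
      ∀ i, i < k → H.arrow (v i) (v (i + 1)) →
        K.arrow (v i) (v (i + 1)) ∧ ¬ K.arrowOnCycle (v i) (v (i + 1)))) ∧
    H.IsChainGraph := by
  have main : ∀ k v, ¬ (H.IsSemiDirectedCycle k v ∧
      ∀ i, i < k → H.arrow (v i) (v (i + 1)) →
        K.arrow (v i) (v (i + 1)) ∧ ¬ K.arrowOnCycle (v i) (v (i + 1))) := by
    rintro k v ⟨⟨hk3, hvk, hstep, ⟨i0, hi0, harr⟩, hdist⟩, hKcond⟩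
    obtain ⟨hKa, hKnc⟩ := hKcond i0 hi0 harr
    have key : ∀ t, t ≤ k - 1 → ∃ n w, IsWalk K n w ∧ w 0 = v ((i0 + 1) % k) ∧
        w n = v ((i0 + 1 + t) % k) := by
      intro t
      induction t with
      | zero =>
        intro _
        exact ⟨0, fun _ => v ((i0 + 1) % k), fun i hi => (Nat.not_lt_zero i hi).elim, rfl, rfl⟩
      | succ t iht =>
        intro ht
        obtain ⟨n, w, hw, hw0, hwn⟩ := iht (by omega)
        set q := (i0 + 1 + t) % k with hq
        have hqk : q < k := Nat.mod_lt _ (by omega)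
        have hw2 : ∃ n2 w2, IsWalk K n2 w2 ∧ w2 0 = v q ∧ w2 n2 = v (q + 1) := by
          rcases hstep q hqk with ha | hl
          · exact exists_walk_of (Or.inl (Or.inl (hKcond q hqk ha).1))
          · rcases (hL _ _).mp hl with h | h | h
            · exact exists_walk_of (Or.inl (Or.inr h))
            · exact exists_walk_of (Or.inl (Or.inl h.1))
            · exact exists_walk_of (Or.inr h.2)
        obtain ⟨n2, w2, hw2', hw20, hw2n⟩ := hw2
        obtain ⟨z, hz, hz0, hzn⟩ := walk_comp hw hw2' (by rw [hwn, hw20])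
        refine ⟨n + n2, z, hz, by rw [hz0, hw0], ?_⟩
        rw [hzn, hw2n]
        have e1 : (i0 + 1 + (t + 1)) % k = (q + 1) % k := by
          rw [hq, Nat.mod_add_mod]
          exact congrArg (· % k) (by omega)
        rw [e1]
        by_cases hqe : q + 1 = k
        · rw [hqe, Nat.mod_self]
          exact hvk
        · rw [Nat.mod_eq_of_lt (by omega)]
    obtain ⟨n, w, hw, hw0, hwn⟩ := key (k - 1) (le_refl _)
    have e0 : v ((i0 + 1) % k) = v (i0 + 1) := by
      by_cases h : i0 + 1 = k
      · rw [h, Nat.mod_self, ← h] at *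
        rw [← h] at hvk
        exact hvk.symm
      · rw [Nat.mod_eq_of_lt (by omega)]
    have e1 : (i0 + 1 + (k - 1)) % k = i0 := by
      rw [show i0 + 1 + (k - 1) = i0 + k by omega, Nat.add_mod_right, Nat.mod_eq_of_lt hi0]
    rw [e0] at hw0
    rw [e1] at hwn
    exact hKnc (arrow_on_cycle_of_walk hKa hw hw0 hwn)
  refine ⟨main, ?_⟩
  intro k v hcyc
  exact main k v ⟨hcyc, fun i hi ha => (hA _ _).mp ha⟩
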